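/- For every nonnegative integer n, ∑_{k=0}^{2n} k·S(n,k) = n·(3^{n+1} - 1)/2. -/

import Mathlib

open Finset

/-- Trinomial coefficient: coefficient of x^i in (1+x+x^2)^n, zero for i<0 (and automatically zero for i>2n). -/
def T (n : ℕ) (i : ℤ) : ℕ :=
  if 0 ≤ i then ∑ j ∈ Finset.range (i.toNat + 1), n.choose j * j.choose (i.toNat - j) else 0

/-- Partial sum trinomial coefficient. -/
def S (n : ℕ) (k : ℤ) : ℕ :=
  ∑ j ∈ Finset.range (n + 1), T (n - j) (k - j)

open Polynomial

noncomputable def P (m : ℕ) : Polynomial ℕ := (1 + X + X ^ 2) ^ m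

lemma T_neg (m : ℕ) {i : ℤ} (h : i < 0) : T m i = 0 := by
  simp [T, not_le.2 h]

lemma T_eq_coeff (m i : ℕ) : T m (i : ℤ) = (P m).coeff i := by
  have h1 : (P m).coeff i = ∑ k ∈ range (m + 1),
      (if k ≤ i then (k.choose (i - k)) else 0) * m.choose k := by
    unfold P
    rw [show (1 + X + X ^ 2 : Polynomial ℕ) = (1 + X) * X + 1 by ring, add_pow,
      finset_sum_coeff]
    refine Finset.sum_congr rfl fun k hk => ?_
    rw [one_pow, mul_one, mul_pow, ← C_eq_natCast, coeff_mul_C, coeff_mul_X_pow']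
    split_ifs with h
    · rw [coeff_one_add_X_pow]; simp
    · rfl
  have h2 : ∑ k ∈ range (m + 1), (if k ≤ i then k.choose (i - k) else 0) * m.choose k
      = ∑ k ∈ range (m + i + 1), (if k ≤ i then k.choose (i - k) else 0) * m.choose k := by
    apply Finset.sum_subset (Finset.range_subset_range.2 (by omega))
    intro x hx hx'
    simp only [Finset.mem_range] at hx'
    rw [Nat.choose_eq_zero_of_lt (show m < x by omega), mul_zero]
  have h3 : ∑ k ∈ range (m + i + 1), (if k ≤ i then k.choose (i - k) else 0) * m.choose k
      = ∑ j ∈ range (i + 1), m.choose j * j.choose (i - j) := by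
    rw [← Finset.sum_subset (Finset.range_subset_range.2 (by omega : i + 1 ≤ m + i + 1))]
    · refine Finset.sum_congr rfl fun j hj => ?_
      simp only [Finset.mem_range] at hj
      rw [if_pos (by omega)]
      ring
    · intro x hx hx'
      simp only [Finset.mem_range] at hx'
      rw [if_neg (by omega), zero_mul]
  have hT : T m (i : ℤ) = ∑ j ∈ range (i + 1), m.choose j * j.choose (i - j) := by
    simp [T, Int.toNat_natCast]
  rw [hT, h1, h2, h3]

lemma natDegree_P (m : ℕ) : (P m).natDegree ≤ 2 * m := by
  unfold P
  refine natDegree_pow_le.trans ?_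
  rw [mul_comm]
  gcongr
  compute_degree

lemma T_eq_zero_of_big (m i : ℕ) (h : 2 * m < i) : T m (i : ℤ) = 0 := by
  rw [T_eq_coeff]
  exact coeff_eq_zero_of_natDegree_lt (lt_of_le_of_lt (natDegree_P m) h)

lemma eval_one_P (m : ℕ) : (P m).eval 1 = 3 ^ m := by
  unfold P
  simp [eval_pow]

lemma sum_T (m : ℕ) : ∑ i ∈ range (2 * m + 1), T m (i : ℤ) = 3 ^ m := by
  have := Polynomial.eval_eq_sum_range' (Nat.lt_succ_of_le (natDegree_P m)) (1 : ℕ)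
  rw [eval_one_P] at this
  simp only [one_pow, mul_one] at this
  have h2 : ∑ i ∈ range (2 * m + 1), T m (i : ℤ) = ∑ i ∈ range (2 * m + 1), (P m).coeff i :=
    Finset.sum_congr rfl fun i _ => T_eq_coeff m i
  exact h2.trans this.symm

lemma sum_weighted_T (m : ℕ) : ∑ i ∈ range (2 * m + 1), i * T m (i : ℤ) = m * 3 ^ m := by
  cases m with
  | zero => simp
  | succ m =>
    have hderiv : derivative (P (m + 1)) = C ((m : ℕ) + 1) * (1 + X + X ^ 2) ^ m
        * derivative (1 + X + X ^ 2 : Polynomial ℕ) := by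
      unfold P
      rw [derivative_pow]
      norm_num
    have heval : (derivative (P (m + 1))).eval 1 = (m + 1) * 3 ^ (m + 1) := by
      rw [hderiv]
      simp [derivative_add, derivative_one, derivative_X, derivative_X_pow]
      ring
    have hdeg : (derivative (P (m + 1))).natDegree < 2 * (m + 1) := by
      have h1 := natDegree_derivative_le (P (m + 1))
      have h2 := natDegree_P (m + 1)
      omega
    have hsum := Polynomial.eval_eq_sum_range' hdeg (1 : ℕ)
    rw [heval] at hsum
    simp only [one_pow, mul_one] at hsum
    have hc : ∀ i ∈ range (2 * (m + 1)), (derivative (P (m + 1))).coeff i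
        = (P (m + 1)).coeff (i + 1) * (i + 1) := fun i _ => coeff_derivative _ i
    rw [Finset.sum_congr rfl hc] at hsum
    have hshift : ∑ i ∈ range (2 * (m + 1) + 1), i * T (m + 1) (i : ℤ)
        = ∑ i ∈ range (2 * (m + 1)), (P (m + 1)).coeff (i + 1) * (i + 1) := by
      rw [Finset.sum_range_succ']
      simp only [Nat.cast_zero, zero_mul, add_zero]
      refine Finset.sum_congr rfl fun i _ => ?_
      rw [T_eq_coeff]
      ring
    rw [hshift, ← hsum]

lemma innerSumT (n j : ℕ) (hj : j ≤ n) :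
    ∑ k ∈ range (2 * n + 1), k * T (n - j) ((k : ℤ) - (j : ℤ)) = n * 3 ^ (n - j) := by
  set m := n - j with hm
  have hsplit : 2 * n + 1 = j + (2 * n + 1 - j) := by omega
  rw [hsplit, Finset.sum_range_add]
  have hz : ∑ k ∈ range j, k * T m ((k : ℤ) - (j : ℤ)) = 0 := by
    refine Finset.sum_eq_zero fun k hk => ?_
    simp only [Finset.mem_range] at hk
    rw [T_neg m (by omega), mul_zero]
  rw [hz, zero_add]
  have h2 : ∑ i ∈ range (2 * n + 1 - j), (j + i) * T m ((j + i : ℕ) - (j : ℤ))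
      = ∑ i ∈ range (2 * n + 1 - j), (j + i) * T m (i : ℤ) := by
    refine Finset.sum_congr rfl fun i _ => ?_
    congr 1
    push_cast
    ring_nf
  rw [h2]
  have h3 : ∑ i ∈ range (2 * n + 1 - j), (j + i) * T m (i : ℤ)
      = ∑ i ∈ range (2 * m + 1), (j + i) * T m (i : ℤ) := by
    rw [← Finset.sum_subset (Finset.range_subset_range.2 (by omega : 2 * m + 1 ≤ 2 * n + 1 - j))]
    intro x hx hx'
    simp only [Finset.mem_range] at hx'
    rw [T_eq_zero_of_big m x (by omega), mul_zero]
  rw [h3]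
  have h4 : ∑ i ∈ range (2 * m + 1), (j + i) * T m (i : ℤ)
      = j * (∑ i ∈ range (2 * m + 1), T m (i : ℤ))
        + ∑ i ∈ range (2 * m + 1), i * T m (i : ℤ) := by
    rw [Finset.mul_sum, ← Finset.sum_add_distrib]
    refine Finset.sum_congr rfl fun i _ => ?_
    ring
  rw [h4, sum_T, sum_weighted_T]
  have hjm : j + m = n := by omega
  rw [← hjm]; ring

lemma geom_aux (n : ℕ) : 2 * (∑ i ∈ range (n + 1), 3 ^ i) + 1 = 3 ^ (n + 1) := by
  induction n with
  | zero => simp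
  | succ n ih =>
    rw [Finset.sum_range_succ]
    rw [pow_succ 3 (n + 1)]
    omega

theorem partial_sum_weighted_sum (n : ℕ) :
    ∑ k ∈ Finset.range (2 * n + 1), k * S n k = n * ((3 ^ (n + 1) - 1) / 2) := by
  have hL : ∑ k ∈ Finset.range (2 * n + 1), k * S n k
      = ∑ j ∈ range (n + 1), ∑ k ∈ range (2 * n + 1), k * T (n - j) ((k : ℤ) - (j : ℤ)) := by
    rw [Finset.sum_comm]
    refine Finset.sum_congr rfl fun k _ => ?_
    rw [S, Finset.mul_sum]
  rw [hL]
  have hinner : ∀ j ∈ range (n + 1),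
      ∑ k ∈ range (2 * n + 1), k * T (n - j) ((k : ℤ) - (j : ℤ)) = n * 3 ^ (n - j) := by
    intro j hj
    simp only [Finset.mem_range] at hj
    exact innerSumT n j (by omega)
  rw [Finset.sum_congr rfl hinner, ← Finset.mul_sum]
  have hr : ∑ j ∈ range (n + 1), 3 ^ (n - j) = ∑ i ∈ range (n + 1), 3 ^ i := by
    rw [← Finset.sum_range_reflect]
    refine Finset.sum_congr rfl fun i hi => ?_
    simp only [Finset.mem_range] at hi
    congr 1
    omega
  rw [hr]
  have := geom_aux n
  congr 1
  omega
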